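/- Stretched-exponential lower bound: for the diagonal walk on the 2D randomly oriented Manhattan lattice with i.i.d. uniform orientations, there exist constants C₁, c₁ > 0 such that for all n, P(max_{i≥0} ‖Z_i‖ > n) ≥ C₁ exp(−c₁ n^{1/3}). -/

import Mathlib

open MeasureTheory ProbabilityTheory

/-- The deterministic diagonal walk on the randomly oriented Manhattan lattice. -/
def manhattanWalk (U V : ℤ → ℤ) : ℕ → ℤ × ℤ
  | 0 => (0, 0)
  | n + 1 =>
      ((manhattanWalk U V n).1 + U (manhattanWalk U V n).2,
       (manhattanWalk U V n).2 + V (manhattanWalk U V n).1)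

namespace ManhattanAux

open Real
open scoped ENNReal NNReal


def step (b : Bool) : ℤ := if b then 1 else -1

lemma step_injective : Function.Injective step := by decide

lemma step_one_or_neg (b : Bool) : step b = 1 ∨ step b = -1 := by cases b <;> simp [step]

def sumSteps (l : List Bool) : ℤ := (l.map step).sum

@[simp] lemma sumSteps_nil : sumSteps [] = 0 := rfl

@[simp] lemma sumSteps_cons (b : Bool) (t : List Bool) :
    sumSteps (b :: t) = step b + sumSteps t := by
  simp [sumSteps]

def confB (L : ℕ) : ℤ → List Bool → Bool
  | _, [] => true
  | x, b :: t => (decide (|x + step b| < (L : ℤ))) && confB L (x + step b) t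

@[simp] lemma confB_nil (L : ℕ) (x : ℤ) : confB L x ([] : List Bool) = true := rfl

lemma confB_cons (L : ℕ) (x : ℤ) (b : Bool) (t : List Bool) :
    confB L x (b :: t) = ((decide (|x + step b| < (L : ℤ))) && confB L (x + step b) t) := rfl

lemma confB_pos (L : ℕ) : ∀ (l : List Bool) (x : ℤ), confB L x l = true →
    ∀ j : ℕ, j ≠ 0 → j ≤ l.length → |x + sumSteps (l.take j)| < L := by
  intro l
  induction l with
  | nil => intro x _ j hj0 hjl; simp at hjl; omega
  | cons b t ih =>
    intro x h j hj0 hjl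
    rw [confB_cons, Bool.and_eq_true, decide_eq_true_eq] at h
    match j with
    | 1 =>
      simpa using h.1
    | (k+2) =>
      have := ih (x + step b) h.2 (k+1) (by omega) (by simpa using hjl)
      rw [List.take_succ_cons, sumSteps_cons, ← add_assoc]
      simpa [add_assoc] using this

lemma sumSteps_take_succ : ∀ (l : List Bool) (j : ℕ) (h : j < l.length),
    sumSteps (l.take (j+1)) = sumSteps (l.take j) + step (l.get ⟨j, h⟩) := by
  intro l
  induction l with
  | nil => intro j h; simp at h
  | cons b t ih =>
    intro j h
    match j with
    | 0 => simp
    | (k+1) =>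
      have h' : k < t.length := by simpa using h
      simp only [List.take_succ_cons, sumSteps_cons, List.get_cons_succ]
      rw [ih k h', add_assoc]


lemma walk_spec {L : ℕ} (hL : 1 ≤ L) (Uf Vf : ℤ → ℤ) (l : List Bool)
    (hU : ∀ y : ℤ, |y| < (L : ℤ) → Uf y = 1)
    (hV : ∀ (i : ℕ) (h : i < l.length), Vf i = step (l.get ⟨i, h⟩))
    (hconf : confB L 0 l = true) :
    ∀ j, j ≤ l.length → manhattanWalk Uf Vf j = ((j : ℤ), sumSteps (l.take j)) := by
  intro j
  induction j with
  | zero => intro _; simp [manhattanWalk]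
  | succ j ih =>
    intro hj
    have hjl : j < l.length := by omega
    have IH := ih (by omega)
    have habs : |sumSteps (l.take j)| < (L : ℤ) := by
      rcases Nat.eq_zero_or_pos j with h0 | h0
      · subst h0; simpa using (show 0 < L by omega)
      · have := confB_pos L l 0 hconf j (by omega) (by omega)
        simpa using this
    have hw : manhattanWalk Uf Vf (j+1) =
        ((manhattanWalk Uf Vf j).1 + Uf (manhattanWalk Uf Vf j).2,
         (manhattanWalk Uf Vf j).2 + Vf (manhattanWalk Uf Vf j).1) := rfl
    rw [hw, IH]
    simp only
    rw [hU _ habs, hV j hjl, sumSteps_take_succ l j hjl]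
    rw [Prod.mk.injEq]
    constructor
    · push_cast; ring
    · rfl

noncomputable def fw (L : ℕ) (x : ℤ) : ℝ := Real.cos (π * x / (2 * L))

lemma fw_le_one (L : ℕ) (x : ℤ) : fw L x ≤ 1 := Real.cos_le_one _

lemma fw_zero (L : ℕ) : fw L 0 = 1 := by simp [fw]

lemma fw_boundary {L : ℕ} (hL : 1 ≤ L) {x : ℤ} (hx : x = (L : ℤ) ∨ x = -(L : ℤ)) :
    fw L x = 0 := by
  have hL0 : (L : ℝ) ≠ 0 := by positivity
  rcases hx with h | h <;> subst h <;> unfold fw <;> push_cast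
  · rw [show π * (L : ℝ) / (2 * L) = π / 2 by field_simp]
    exact Real.cos_pi_div_two
  · rw [show π * (-(L : ℝ)) / (2 * L) = -(π / 2) by field_simp]
    rw [Real.cos_neg]; exact Real.cos_pi_div_two

lemma fw_identity (L : ℕ) (x : ℤ) :
    fw L (x + 1) + fw L (x - 1) = 2 * Real.cos (π / (2 * L)) * fw L x := by
  unfold fw
  push_cast
  rw [show π * ((x : ℝ) + 1) / (2 * L) = π * x / (2 * L) + π / (2 * L) by ring,
      show π * ((x : ℝ) - 1) / (2 * L) = π * x / (2 * L) - π / (2 * L) by ring,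
      Real.cos_add, Real.cos_sub]
  ring

lemma cosL_nonneg {L : ℕ} (hL : 1 ≤ L) : 0 ≤ Real.cos (π / (2 * L)) := by
  apply Real.cos_nonneg_of_mem_Icc
  constructor
  · have := Real.pi_pos
    have : (0:ℝ) ≤ π / (2 * L) := by positivity
    linarith
  · rw [div_le_div_iff₀ (by positivity) (by norm_num)]
    have h1 : (1:ℝ) ≤ (L:ℝ) := by exact_mod_cast hL
    nlinarith [Real.pi_pos]

noncomputable def HH (L m : ℕ) (x : ℤ) : ℝ :=
  ∑ σ : Fin m → Bool, if confB L x (List.ofFn σ) = true then 1 else 0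

lemma HH_nonneg (L m : ℕ) (x : ℤ) : 0 ≤ HH L m x := by
  apply Finset.sum_nonneg; intro σ _; split <;> norm_num

lemma ofFn_cons (m : ℕ) (b : Bool) (τ : Fin m → Bool) :
    List.ofFn (Fin.cons b τ : Fin (m+1) → Bool) = b :: List.ofFn τ := by
  rw [List.ofFn_succ]
  simp [Fin.cons_zero, Fin.cons_succ]

lemma HH_succ (L m : ℕ) (x : ℤ) :
    HH L (m+1) x = ∑ b : Bool, if |x + step b| < (L : ℤ) then HH L m (x + step b) else 0 := by
  unfold HH
  rw [← (Fin.consEquiv (fun _ : Fin (m+1) => Bool)).sum_comp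
    (fun σ => if confB L x (List.ofFn σ) = true then (1:ℝ) else 0)]
  rw [Fintype.sum_prod_type]
  apply Finset.sum_congr rfl
  intro b _
  by_cases hc : |x + step b| < (L : ℤ)
  · simp only [hc, if_true]
    apply Finset.sum_congr rfl
    intro τ _
    simp [Fin.consEquiv, ofFn_cons, confB, hc]
  · simp only [hc, if_false]
    apply Finset.sum_eq_zero
    intro τ _
    simp [Fin.consEquiv, ofFn_cons, confB, hc]

lemma HH_ge {L : ℕ} (hL : 1 ≤ L) : ∀ (m : ℕ) (x : ℤ), |x| ≤ (L : ℤ) →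
    (2 * Real.cos (π / (2 * L)))^m * fw L x ≤ HH L m x := by
  intro m
  induction m with
  | zero =>
    intro x _
    have : HH L 0 x = 1 := by
      unfold HH
      simp [List.ofFn_zero, confB]
    rw [this, pow_zero, one_mul]
    exact fw_le_one L x
  | succ m ih =>
    intro x hx
    rcases lt_or_eq_of_le hx with hlt | heq
    · -- interior case
      rw [HH_succ]
      have key : ∀ b : Bool,
          (2 * Real.cos (π / (2 * L)))^m * fw L (x + step b)
            ≤ (if |x + step b| < (L : ℤ) then HH L m (x + step b) else 0) := by
        intro b
        by_cases hc : |x + step b| < (L : ℤ)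
        · rw [if_pos hc]; exact ih (x + step b) (le_of_lt hc)
        · rw [if_neg hc]
          have hb : x + step b = (L : ℤ) ∨ x + step b = -(L : ℤ) := by
            have hxl := abs_lt.mp hlt
            rcases show step b = 1 ∨ step b = -1 by cases b <;> simp [step] with h | h <;>
              · rw [h] at hc ⊢
                rw [abs_lt] at hc
                push_neg at hc
                omega
          rw [fw_boundary hL hb, mul_zero]
      have hsum := add_le_add (key true) (key false)
      rw [Fintype.sum_bool]
      refine le_trans (le_of_eq ?_) hsum
      have hst : step true = 1 ∧ step false = -1 := by constructor <;> rfl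
      rw [hst.1, hst.2]
      have := fw_identity L x
      calc (2 * Real.cos (π / (2 * L)))^(m+1) * fw L x
          = (2 * Real.cos (π / (2 * L)))^m * (2 * Real.cos (π / (2 * L)) * fw L x) := by ring
        _ = (2 * Real.cos (π / (2 * L)))^m * (fw L (x + 1) + fw L (x - 1)) := by rw [← this]
        _ = (2 * Real.cos (π / (2 * L)))^m * fw L (x + 1)
            + (2 * Real.cos (π / (2 * L)))^m * fw L (x - 1) := by ring
    · -- boundary case
      have hb : x = (L : ℤ) ∨ x = -(L : ℤ) := by
        rcases abs_eq (by exact_mod_cast Nat.zero_le L : (0:ℤ) ≤ L) |>.mp heq with h | h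
        · left; exact h
        · right; exact h
      rw [fw_boundary hL hb, mul_zero]
      exact HH_nonneg L (m+1) x

lemma HH_card (L m : ℕ) :
    HH L m 0 = ((Finset.univ.filter
      (fun σ : Fin m → Bool => confB L 0 (List.ofFn σ) = true)).card : ℝ) := by
  unfold HH
  rw [Finset.sum_boole]


lemma HH_card_ge {L : ℕ} (hL : 1 ≤ L) (m : ℕ) :
    (2 * Real.cos (π / (2 * L)))^m ≤ ((Finset.univ.filter
      (fun σ : Fin m → Bool => confB L 0 (List.ofFn σ) = true)).card : ℝ) := by
  have h := HH_ge hL m 0 (by simp)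
  rw [fw_zero, mul_one] at h
  rw [← HH_card]
  exact h

lemma exp_neg_two_le {t : ℝ} (h0 : 0 ≤ t) (h2 : t ≤ 1/2) : Real.exp (-(2*t)) ≤ 1 - t := by
  have h1 : 2*t + 1 ≤ Real.exp (2*t) := Real.add_one_le_exp (2*t)
  have h3 : Real.exp (-(2*t)) * Real.exp (2*t) = 1 := by
    rw [← Real.exp_add]; norm_num
  have h4 : (0:ℝ) < Real.exp (2*t) := Real.exp_pos _
  nlinarith [mul_nonneg (sub_nonneg.2 h1) (by linarith : (0:ℝ) ≤ 1 - t),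
    Real.exp_pos (-(2*t))]

lemma aux_two_t (b : ℝ) (hb : b ≠ 0) : 2*((π/(2*b))^2/2) = π^2/(4*b^2) := by
  field_simp; ring

lemma aux_div (a b : ℝ) (hb : b ≠ 0) : ((a) * b^2) * (π^2/(4*b^2)) = π^2 * a / 4 := by
  field_simp


end ManhattanAux

open ManhattanAux Real
open scoped ENNReal NNReal

set_option maxHeartbeats 1000000 in
theorem range_stretched_exponential_lower_bound
    {Ω : Type*} [MeasurableSpace Ω] (μ : Measure Ω) [IsProbabilityMeasure μ]
    (U V : ℤ → Ω → ℤ)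
    (hUmeas : ∀ y, Measurable (U y)) (hVmeas : ∀ x, Measurable (V x))
    (hU1 : ∀ y, μ {ω | U y ω = 1} = 1/2) (hUm1 : ∀ y, μ {ω | U y ω = -1} = 1/2)
    (hV1 : ∀ x, μ {ω | V x ω = 1} = 1/2) (hVm1 : ∀ x, μ {ω | V x ω = -1} = 1/2)
    (hindep : iIndepFun
      (fun i : ℤ ⊕ ℤ => Sum.elim U V i) μ)
    (Z : Ω → ℕ → ℤ × ℤ)
    (hZ : ∀ ω n, Z ω n = manhattanWalk (fun y => U y ω) (fun x => V x ω) n) :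
    ∃ C₁ > (0 : ℝ), ∃ c₁ > (0 : ℝ), ∀ n : ℕ,
      ENNReal.ofReal (C₁ * Real.exp (-c₁ * (n : ℝ) ^ ((1 : ℝ)/3)))
        ≤ μ {ω | ∃ i : ℕ, (n : ℤ) < max |(Z ω i).1| |(Z ω i).2|} := by
  have hlog2 : (0:ℝ) < Real.log 2 := Real.log_pos (by norm_num)
  have hpi := Real.pi_pos
  refine ⟨Real.exp (-(π^2/4 + 4*Real.log 2)), Real.exp_pos _,
    π^2/4 + 2*Real.log 2, by positivity, fun n => ?_⟩
  set r : ℝ := (n : ℝ) ^ ((1 : ℝ)/3) with hr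
  have hr0 : 0 ≤ r := Real.rpow_nonneg (Nat.cast_nonneg n) _
  obtain ⟨L, hL2, hLr1, hLr2⟩ : ∃ L : ℕ, 2 ≤ L ∧ r + 1 ≤ (L:ℝ) ∧ (L:ℝ) ≤ r + 2 := by
    refine ⟨Nat.floor r + 2, by omega, ?_, ?_⟩
    · have := Nat.lt_floor_add_one r
      push_cast; linarith
    · have := Nat.floor_le hr0
      push_cast; linarith
  set m : ℕ := n + 1 with hm
  have hL1 : 1 ≤ L := by omega
  -- the index set and target sets
  set SS : Finset (ℤ ⊕ ℤ) :=
    (Finset.Icc (1 - (L:ℤ)) ((L:ℤ) - 1)).disjSum ((Finset.range m).image (fun i : ℕ => (i:ℤ)))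
    with hSS
  set sets : (Fin m → Bool) → (ℤ ⊕ ℤ) → Set ℤ :=
    fun σ => Sum.elim (fun _ => {1}) (fun x => {step ((List.ofFn σ).getD x.toNat true)})
    with hsets
  set E : (Fin m → Bool) → Set Ω :=
    fun σ => ⋂ j ∈ SS, (fun i : ℤ ⊕ ℤ => Sum.elim U V i) j ⁻¹' sets σ j with hE
  set F : Finset (Fin m → Bool) :=
    Finset.univ.filter (fun σ : Fin m → Bool => confB L 0 (List.ofFn σ) = true) with hF
  -- membership facts
  have hmemU : ∀ σ ω, ω ∈ E σ → ∀ y : ℤ, |y| < (L:ℤ) → U y ω = 1 := by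
    intro σ ω hω y hy
    have hyS : Sum.inl y ∈ SS := by
      rw [hSS, Finset.inl_mem_disjSum, Finset.mem_Icc]
      rw [abs_lt] at hy; omega
    have := Set.mem_iInter₂.mp hω (Sum.inl y) hyS
    simpa [hsets] using this
  have hmemV : ∀ σ ω, ω ∈ E σ → ∀ (i : ℕ) (hi : i < m),
      V (i:ℤ) ω = step ((List.ofFn σ).get ⟨i, by rw [List.length_ofFn]; exact hi⟩) := by
    intro σ ω hω i hi
    have hiS : Sum.inr ((i:ℕ):ℤ) ∈ SS := by
      rw [hSS, Finset.inr_mem_disjSum, Finset.mem_image]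
      exact ⟨i, Finset.mem_range.mpr hi, rfl⟩
    have := Set.mem_iInter₂.mp hω (Sum.inr ((i:ℕ):ℤ)) hiS
    simp only [hsets, Sum.elim_inr, Set.mem_preimage, Set.mem_singleton_iff] at this
    rw [this]
    congr 1
    rw [Int.toNat_natCast]
    exact List.getD_eq_get _ _ ⟨i, by rw [List.length_ofFn]; exact hi⟩
  -- each elementary event has probability (1/2)^K
  have hmeasSets : ∀ σ, ∀ i ∈ SS, MeasurableSet (sets σ i) := by
    intro σ i _
    rcases i with y | x <;> exact measurableSet_singleton _
  have hcard : SS.card = (2*L - 1) + m := by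
    rw [hSS, Finset.card_disjSum, Int.card_Icc,
      Finset.card_image_of_injective _ (fun a b h => by exact_mod_cast h),
      Finset.card_range]
    omega
  have hPE : ∀ σ, μ (E σ) = (1/2 : ℝ≥0∞) ^ ((2*L - 1) + m) := by
    intro σ
    rw [hE]
    have := hindep.measure_inter_preimage_eq_mul SS (hmeasSets σ)
    rw [this]
    have hfac : ∀ j ∈ SS, μ ((fun i : ℤ ⊕ ℤ => Sum.elim U V i) j ⁻¹' sets σ j)
        = (1/2 : ℝ≥0∞) := by
      intro j _
      rcases j with y | x
      · have he : (fun i : ℤ ⊕ ℤ => Sum.elim U V i) (Sum.inl y) ⁻¹' (sets σ (Sum.inl y))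
            = {ω | U y ω = 1} := by
          ext ω; simp [hsets]
        rw [he]; exact hU1 y
      · have hstep : step ((List.ofFn σ).getD x.toNat true) = 1 ∨
            step ((List.ofFn σ).getD x.toNat true) = -1 := by
          cases ((List.ofFn σ).getD x.toNat true) <;> simp [step]
        rcases hstep with h | h
        · have he : (fun i : ℤ ⊕ ℤ => Sum.elim U V i) (Sum.inr x) ⁻¹' (sets σ (Sum.inr x))
              = {ω | V x ω = 1} := by
            ext ω
            simp only [hsets, Sum.elim_inr, Set.mem_preimage, Set.mem_singleton_iff, h,
              Set.mem_setOf_eq]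
          rw [he]; exact hV1 x
        · have he : (fun i : ℤ ⊕ ℤ => Sum.elim U V i) (Sum.inr x) ⁻¹' (sets σ (Sum.inr x))
              = {ω | V x ω = -1} := by
            ext ω
            simp only [hsets, Sum.elim_inr, Set.mem_preimage, Set.mem_singleton_iff, h,
              Set.mem_setOf_eq]
          rw [he]; exact hVm1 x
    rw [Finset.prod_congr rfl hfac, Finset.prod_const, hcard]
  -- disjointness
  have hdisj : Set.PairwiseDisjoint (↑F) E := by
    intro σ _ τ _ hne
    apply Set.disjoint_left.mpr
    intro ω hωσ hωτ
    have : σ ≠ τ := hne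
    obtain ⟨i, hi⟩ : ∃ i : Fin m, σ i ≠ τ i := by
      by_contra hcon; push_neg at hcon; exact this (funext hcon)
    have h1 := hmemV σ ω hωσ i.1 i.2
    have h2 := hmemV τ ω hωτ i.1 i.2
    rw [h1] at h2
    have h3 : σ i = τ i := by
      have h4 := (show Function.Injective step by decide) h2
      simp only [List.get_ofFn, Fin.cast_mk, Fin.eta] at h4
      exact h4
    exact hi h3
  -- measurability of E σ
  have hmeasE : ∀ σ ∈ F, MeasurableSet (E σ) := by
    intro σ _
    rw [hE]
    apply MeasurableSet.biInter (Finset.countable_toSet SS)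
    intro j hj
    rcases j with y | x
    · exact hUmeas y (measurableSet_singleton _)
    · exact hVmeas x (measurableSet_singleton _)
  -- the union is inside the target event
  have hsubset : (⋃ σ ∈ F, E σ) ⊆
      {ω | ∃ i : ℕ, (n : ℤ) < max |(Z ω i).1| |(Z ω i).2|} := by
    intro ω hω
    rw [Set.mem_iUnion₂] at hω
    obtain ⟨σ, hσF, hωE⟩ := hω
    have hconf : confB L 0 (List.ofFn σ) = true := by
      rw [hF] at hσF; simpa using (Finset.mem_filter.mp hσF).2
    have hlen : (List.ofFn σ).length = m := by simp [hm]
    have hwalk := walk_spec hL1 (fun y => U y ω) (fun x => V x ω) (List.ofFn σ)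
      (fun y hy => hmemU σ ω hωE y hy)
      (fun i h => hmemV σ ω hωE i (by rw [List.length_ofFn] at h; exact h))
      hconf m (le_of_eq hlen.symm)
    refine ⟨m, ?_⟩
    rw [hZ, hwalk]
    simp only
    have : ((m:ℤ)) = (n:ℤ) + 1 := by push_cast [hm]; ring
    calc (n:ℤ) < (m:ℤ) := by omega
      _ ≤ |(m:ℤ)| := le_abs_self _
      _ ≤ max |(m:ℤ)| _ := le_max_left _ _
  -- putting the measure together
  have hμB : ((F.card : ℝ≥0∞) * (1/2 : ℝ≥0∞) ^ ((2*L - 1) + m))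
      ≤ μ {ω | ∃ i : ℕ, (n : ℤ) < max |(Z ω i).1| |(Z ω i).2|} := by
    calc (F.card : ℝ≥0∞) * (1/2 : ℝ≥0∞) ^ ((2*L - 1) + m)
        = ∑ σ ∈ F, μ (E σ) := by
          rw [Finset.sum_congr rfl (g := fun _ => (1/2 : ℝ≥0∞) ^ ((2*L - 1) + m))
            (fun σ _ => hPE σ), Finset.sum_const, nsmul_eq_mul]
      _ = μ (⋃ σ ∈ F, E σ) := (measure_biUnion_finset hdisj hmeasE).symm
      _ ≤ _ := measure_mono hsubset
  refine le_trans ?_ hμB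
  -- now the numeric estimate
  set K : ℕ := (2*L - 1) + m with hK
  set c : ℝ := Real.cos (π / (2 * L)) with hc
  have hc0 : 0 ≤ c := cosL_nonneg hL1
  have hLpos : (0:ℝ) < (L:ℝ) := by linarith
  have hr3 : r ^ 3 = (n : ℝ) := by
    rw [hr, ← Real.rpow_natCast ((n:ℝ) ^ ((1:ℝ)/3)) 3, ← Real.rpow_mul (Nat.cast_nonneg n)]
    norm_num
  set t : ℝ := (π / (2 * (L:ℝ)))^2 / 2 with ht
  have ht0 : 0 ≤ t := by positivity
  have htmax : t ≤ 1/2 := by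
    have h1 : π / (2 * (L:ℝ)) ≤ 1 := by
      rw [div_le_one (by positivity)]
      have h4 := Real.pi_le_four
      have : (2:ℝ) ≤ (L:ℝ) := by exact_mod_cast hL2
      linarith
    have h0 : 0 ≤ π / (2 * (L:ℝ)) := by positivity
    rw [ht]
    nlinarith
  have hcge : Real.exp (-(2*t)) ≤ c := by
    have h5 := Real.one_sub_sq_div_two_le_cos (x := π/(2*(L:ℝ)))
    have h6 := exp_neg_two_le ht0 htmax
    rw [hc]
    have : (2 * ((L:ℝ))) = (2 * (L:ℕ) : ℝ) := by push_cast; ring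
    calc Real.exp (-(2*t)) ≤ 1 - t := h6
      _ = 1 - (π/(2*(L:ℝ)))^2/2 := by rw [ht]
      _ ≤ Real.cos (π / (2*(L:ℝ))) := h5
      _ = Real.cos (π / (2*(L:ℕ))) := by norm_num
  have hcm : Real.exp ((m:ℝ) * (-(2*t))) ≤ c ^ m := by
    rw [Real.exp_nat_mul]
    exact pow_le_pow_left₀ (Real.exp_nonneg _) hcge m
  set k : ℕ := 2*L - 1 with hk
  have hkr : (k:ℝ) = 2*(L:ℝ) - 1 := by
    rw [hk]; push_cast [Nat.cast_sub (by omega : 1 ≤ 2*L)]; ring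
  have hhalfexp : ((1:ℝ)/2) = Real.exp (-(Real.log 2)) := by
    rw [Real.exp_neg, Real.exp_log (by norm_num : (0:ℝ) < 2)]
    norm_num
  have hhalfpow : ((1:ℝ)/2) ^ k = Real.exp ((k:ℝ) * (-(Real.log 2))) := by
    rw [hhalfexp, Real.exp_nat_mul]
  -- the main real inequality
  have hmle : (m:ℝ) ≤ (r+1) * (L:ℝ)^2 := by
    have hsq : (r+1)^2 ≤ (L:ℝ)^2 := by nlinarith
    have h7 : (r+1)*(r+1)^2 ≤ (r+1)*(L:ℝ)^2 :=
      mul_le_mul_of_nonneg_left hsq (by linarith)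
    have h8 : (m:ℝ) = r^3 + 1 := by rw [hm]; push_cast; rw [← hr3]
    nlinarith [h7, h8, hr0, sq_nonneg r]
  have key1 : (m:ℝ) * (2*t) ≤ π^2 * (r+1)/4 := by
    have h2t : 2*t = π^2/(4*(L:ℝ)^2) := by
      rw [ht]; exact aux_two_t (L:ℝ) (by positivity)
    rw [h2t]
    calc (m:ℝ) * (π^2/(4*(L:ℝ)^2)) ≤ ((r+1) * (L:ℝ)^2) * (π^2/(4*(L:ℝ)^2)) :=
          mul_le_mul_of_nonneg_right hmle (by positivity)
      _ = π^2 * (r+1)/4 := aux_div (r+1) (L:ℝ) (by positivity)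
  have key2 : (k:ℝ) * Real.log 2 ≤ (2*r+4) * Real.log 2 := by
    apply mul_le_mul_of_nonneg_right _ hlog2.le
    rw [hkr]; linarith
  have hexpine : -(π^2/4 + 4*Real.log 2) + (-(π^2/4 + 2*Real.log 2) * r)
      ≤ (m:ℝ) * (-(2*t)) + (k:ℝ) * (-(Real.log 2)) := by nlinarith
  have hreal : Real.exp (-(π^2/4 + 4*Real.log 2)) * Real.exp (-(π^2/4 + 2*Real.log 2) * r)
      ≤ (F.card : ℝ) * ((1:ℝ)/2)^K := by
    have hKk : K = k + m := by omega
    have hNreal : (2*c)^m ≤ (F.card : ℝ) := by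
      have := HH_card_ge (L := L) hL1 m
      rw [hF]
      exact this
    calc Real.exp (-(π^2/4 + 4*Real.log 2)) * Real.exp (-(π^2/4 + 2*Real.log 2) * r)
        = Real.exp (-(π^2/4 + 4*Real.log 2) + (-(π^2/4 + 2*Real.log 2) * r)) := by
          rw [Real.exp_add]
      _ ≤ Real.exp ((m:ℝ) * (-(2*t)) + (k:ℝ) * (-(Real.log 2))) :=
          Real.exp_le_exp.mpr hexpine
      _ = Real.exp ((m:ℝ) * (-(2*t))) * Real.exp ((k:ℝ) * (-(Real.log 2))) :=
          Real.exp_add _ _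
      _ ≤ c^m * ((1:ℝ)/2)^k := by
          apply mul_le_mul hcm (le_of_eq hhalfpow.symm) (Real.exp_nonneg _)
          positivity
      _ = (2*c)^m * ((1:ℝ)/2)^K := by
          have hsplit : ((1:ℝ)/2)^K = ((1:ℝ)/2)^k * ((1:ℝ)/2)^m := by
            rw [hKk, pow_add]
          have h2m : ((2:ℝ)*c)^m * ((1:ℝ)/2)^m = c^m := by
            rw [← mul_pow, show (2:ℝ)*c*(1/2) = c by ring]
          calc c^m * ((1:ℝ)/2)^k
              = (((2:ℝ)*c)^m * ((1:ℝ)/2)^m) * ((1:ℝ)/2)^k := by rw [h2m]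
            _ = (2*c)^m * ((1:ℝ)/2)^K := by rw [hsplit]; ring
      _ ≤ (F.card : ℝ) * ((1:ℝ)/2)^K :=
          mul_le_mul_of_nonneg_right hNreal (by positivity)
  have hENN : ((F.card : ℝ≥0∞) * (1/2 : ℝ≥0∞) ^ K)
      = ENNReal.ofReal ((F.card : ℝ) * ((1:ℝ)/2)^K) := by
    rw [ENNReal.ofReal_mul (Nat.cast_nonneg _), ENNReal.ofReal_pow (by norm_num : (0:ℝ) ≤ 1/2),
      ENNReal.ofReal_natCast]
    congr 1
    rw [show ((1:ℝ)/2) = (2:ℝ)⁻¹ by norm_num,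
      ENNReal.ofReal_inv_of_pos (by norm_num : (0:ℝ) < 2)]
    simp [ENNReal.ofReal_ofNat]
  rw [hENN]
  exact ENNReal.ofReal_le_ofReal hreal
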